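/- Gale–Ryser inequality: let A be an m×n 0-1 matrix with row sums r_1 ≥ ... ≥ r_m and column sums c_1 ≥ ... ≥ c_n (sorted non-increasingly). Then the column sum sequence c is majorized by the conjugate r^T of the row sum partition. -/

import Mathlib

theorem gale_ryser {m n : ℕ} (A : Matrix (Fin m) (Fin n) ℕ)
    (h01 : ∀ i j, A i j = 0 ∨ A i j = 1)
    (r : Fin m → ℕ) (hr : r = fun i => ∑ j, A i j) (hrmono : Antitone r)
    (c : Fin n → ℕ) (hc : c = fun j => ∑ i, A i j) (hcmono : Antitone c)
    (rT : ℕ → ℕ)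
    (hrT : rT = fun t => (Finset.univ.filter fun i : Fin m => t ≤ r i).card) :
    (∀ k : ℕ,
      (∑ j ∈ Finset.univ.filter (fun j : Fin n => (j : ℕ) < k), c j) ≤
        ∑ t ∈ Finset.Icc 1 k, rT t) ∧
    (∑ j, c j) = (∑ t ∈ Finset.Icc 1 n, rT t) := by
  have hA1 : ∀ i j, A i j ≤ 1 := fun i j => by rcases h01 i j with h | h <;> simp [h]
  -- key: ∑_{t=1}^k rT t = ∑_i min (r i) k
  have key : ∀ k : ℕ, ∑ t ∈ Finset.Icc 1 k, rT t = ∑ i, min (r i) k := by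
    intro k
    calc ∑ t ∈ Finset.Icc 1 k, rT t
        = ∑ t ∈ Finset.Icc 1 k, ∑ i : Fin m, (if t ≤ r i then 1 else 0) := by
          simp only [hrT, Finset.card_filter]
      _ = ∑ i : Fin m, ∑ t ∈ Finset.Icc 1 k, (if t ≤ r i then 1 else 0) := Finset.sum_comm
      _ = ∑ i, min (r i) k := by
          refine Finset.sum_congr rfl fun i _ => ?_
          rw [← Finset.card_filter]
          have : (Finset.Icc 1 k).filter (fun t => t ≤ r i) = Finset.Icc 1 (min (r i) k) := by
            ext t; simp [Finset.mem_Icc]; omega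
          rw [this, Nat.card_Icc]
          omega
  have hrk : ∀ i, r i ≤ n := by
    intro i
    calc r i = ∑ j, A i j := by rw [hr]
      _ ≤ ∑ _j : Fin n, 1 := Finset.sum_le_sum fun j _ => hA1 i j
      _ = n := by simp
  constructor
  · intro k
    rw [key k]
    have : (∑ j ∈ Finset.univ.filter (fun j : Fin n => (j : ℕ) < k), c j)
        = ∑ i : Fin m, ∑ j ∈ Finset.univ.filter (fun j : Fin n => (j : ℕ) < k), A i j := by
      rw [hc]; exact Finset.sum_comm
    rw [this]
    refine Finset.sum_le_sum fun i _ => le_min ?_ ?_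
    · rw [hr]
      exact Finset.sum_le_sum_of_subset (Finset.filter_subset _ _)
    · calc ∑ j ∈ Finset.univ.filter (fun j : Fin n => (j : ℕ) < k), A i j
          ≤ ∑ _j ∈ Finset.univ.filter (fun j : Fin n => (j : ℕ) < k), 1 :=
            Finset.sum_le_sum fun j _ => hA1 i j
        _ = (Finset.univ.filter (fun j : Fin n => (j : ℕ) < k)).card := by simp
        _ ≤ (Finset.range k).card := by
            refine Finset.card_le_card_of_injOn (fun j => (j : ℕ)) ?_ ?_
            · intro j hj; simp at hj ⊢; exact hj
            · intro a _ b _ h; exact Fin.val_injective h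
        _ = k := Finset.card_range k
  · rw [key n]
    have : ∀ i, min (r i) n = r i := fun i => min_eq_left (hrk i)
    simp only [this]
    rw [hc, hr]
    exact Finset.sum_comm
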